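/- arXiv:1708.09765 — 4 statements merged into one kernel-verified Lean document; each statement's English description precedes it below -/
import Mathlib

section
/- For every function h : ℕ × ℕ → ℕ there exists an infinite set D ⊆ ℕ such that either (a) there is M ∈ ℕ with h (x, y) ≤ M for all x < y in D, or (b) there is a function g : ℕ → ℕ tending to infinity with h (x, y) > g x for all x < y in D. -/
noncomputable section RamseyAux

open Classical

namespace RamseyAux

variable (h : ℕ × ℕ → ℕ)

/-- level sets of `h (sInf S, ·)` inside `S` above `sInf S` -/
def P (S : Set ℕ) (v : ℕ) : Set ℕ := {y ∈ S | sInf S < y ∧ h (sInf S, y) = v}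

def step (S : Set ℕ) : Set ℕ :=
  if hv : ∃ v, (P h S v).Infinite then P h S hv.choose
  else {y ∈ S | sInf S < y ∧ sInf S < h (sInf S, y)}

def tagv (S : Set ℕ) : Option ℕ :=
  if hv : ∃ v, (P h S v).Infinite then some hv.choose else none

lemma step_subset (S : Set ℕ) : step h S ⊆ S := by
  unfold step
  split_ifs with hv
  · exact fun y hy => hy.1
  · exact fun y hy => hy.1

lemma lt_of_mem_step (S : Set ℕ) {y : ℕ} (hy : y ∈ step h S) : sInf S < y := by
  unfold step at hy
  split_ifs at hy with hv
  · exact hy.2.1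
  · exact hy.2.1

lemma step_infinite (S : Set ℕ) (hS : S.Infinite) : (step h S).Infinite := by
  unfold step
  split_ifs with hv
  · exact hv.choose_spec
  · push_neg at hv
    have h1 : ({y ∈ S | sInf S < y} : Set ℕ).Infinite := by
      have : S \ {y | y ≤ sInf S} ⊆ {y ∈ S | sInf S < y} := by
        intro y hy; exact ⟨hy.1, lt_of_not_ge hy.2⟩
      exact ((hS.diff (Set.finite_le_nat _))).mono this
    have h2 : ({y ∈ S | sInf S < y} \ ⋃ v ∈ Finset.range (sInf S + 1), P h S v).Infinite :=
      h1.diff (Set.Finite.biUnion (Finset.range (sInf S + 1)).finite_toSet (fun v _ => hv v))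
    refine h2.mono ?_
    intro y hy
    refine ⟨hy.1.1, hy.1.2, ?_⟩
    by_contra hle
    push_neg at hle
    exact hy.2 (Set.mem_biUnion (Finset.mem_range.mpr (Nat.lt_succ_of_le hle))
      ⟨hy.1.1, hy.1.2, rfl⟩)

lemma h_of_mem_step_some (S : Set ℕ) {v y : ℕ} (ht : tagv h S = some v)
    (hy : y ∈ step h S) : h (sInf S, y) = v := by
  by_cases hv : ∃ v, (P h S v).Infinite
  · have hy' : y ∈ P h S hv.choose := by rwa [step, dif_pos hv] at hy
    have hvv : some hv.choose = some v := by rwa [tagv, dif_pos hv] at ht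
    cases hvv; exact hy'.2.2
  · rw [tagv, dif_neg hv] at ht; cases ht

lemma h_of_mem_step_none (S : Set ℕ) {y : ℕ} (ht : tagv h S = none)
    (hy : y ∈ step h S) : sInf S < h (sInf S, y) := by
  by_cases hv : ∃ v, (P h S v).Infinite
  · rw [tagv, dif_pos hv] at ht; cases ht
  · rw [step, dif_neg hv] at hy; exact hy.2.2

def chain : ℕ → Set ℕ
  | 0 => Set.univ
  | k + 1 => step h (chain k)

def xx (k : ℕ) : ℕ := sInf (chain h k)

lemma chain_infinite : ∀ k, (chain h k).Infinite
  | 0 => Set.infinite_univ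
  | k + 1 => step_infinite h _ (chain_infinite k)

lemma xx_mem (k : ℕ) : xx h k ∈ chain h k :=
  Nat.sInf_mem (chain_infinite h k).nonempty

lemma chain_mono {j k : ℕ} (hjk : j ≤ k) : chain h k ⊆ chain h j := by
  induction k with
  | zero => simpa using (Nat.le_zero.mp hjk) ▸ subset_rfl
  | succ k ih =>
      rcases Nat.lt_or_ge j (k+1) with hj | hj
      · exact (step_subset h _).trans (ih (Nat.lt_succ_iff.mp hj))
      · have : j = k + 1 := le_antisymm hjk hj
        subst this; exact subset_rfl

lemma xx_strictMono : StrictMono (xx h) := by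
  apply strictMono_nat_of_lt_succ
  intro k
  exact lt_of_mem_step h (chain h k) (xx_mem h (k+1))

lemma xx_mem_of_lt {j k : ℕ} (hjk : j < k) : xx h k ∈ chain h (j + 1) :=
  chain_mono h hjk (xx_mem h k)

def tg (k : ℕ) : Option ℕ := tagv h (chain h k)

def mm (k : ℕ) : ℕ := (tg h k).getD (xx h k + 1)

lemma h_eq_of_tag_some {j k v : ℕ} (hjk : j < k) (ht : tg h j = some v) :
    h (xx h j, xx h k) = v :=
  h_of_mem_step_some h (chain h j) ht (xx_mem_of_lt h hjk)

lemma key {j k : ℕ} (hjk : j < k) : mm h j ≤ h (xx h j, xx h k) := by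
  unfold mm
  rcases ho : tg h j with _ | v
  · simpa [xx] using h_of_mem_step_none h (chain h j) ho (xx_mem_of_lt h hjk)
  · simp [h_eq_of_tag_some h hjk ho]

end RamseyAux

end RamseyAux

/-- Ramsey-like dichotomy: for every `h : ℕ × ℕ → ℕ` there is an infinite
set `D ⊆ ℕ` on which `h` is either uniformly bounded on increasing pairs,
or dominates a function tending to infinity. -/
theorem ramsey_bounds (h : ℕ × ℕ → ℕ) :
    ∃ D : Set ℕ, D.Infinite ∧
      ((∃ M : ℕ, ∀ x ∈ D, ∀ y ∈ D, x < y → h (x, y) ≤ M) ∨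
       (∃ g : ℕ → ℕ, Filter.Tendsto g Filter.atTop Filter.atTop ∧
          ∀ x ∈ D, ∀ y ∈ D, x < y → h (x, y) > g x)) := by
  classical
  open RamseyAux in
  by_cases hA : ∃ v, {k | tg h k = some v}.Infinite
  · -- bounded case
    obtain ⟨v, hK⟩ := hA
    refine ⟨xx h '' {k | tg h k = some v},
      hK.image ((xx_strictMono h).injective.injOn), Or.inl ⟨v, ?_⟩⟩
    rintro a ⟨j, hj, rfl⟩ b ⟨k, hk, rfl⟩ hab
    have hjk : j < k := (xx_strictMono h).lt_iff_lt.mp hab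
    exact le_of_eq (h_eq_of_tag_some h hjk hj)
  · -- unbounded case
    push_neg at hA
    have hmfin : ∀ v, {k | mm h k = v}.Finite := by
      intro v
      have hsub : {k | mm h k = v} ⊆ {k | tg h k = some v} ∪ {k | xx h k + 1 = v} := by
        intro k hk
        rcases ho : tg h k with _ | w
        · right; simpa [mm, ho] using hk
        · left; have : w = v := by simpa [mm, ho] using hk
          simp [ho, this]
      refine Set.Finite.subset (Set.Finite.union (hA v) ?_) hsub
      apply Set.Subsingleton.finite
      intro a ha b hb
      simp only [Set.mem_setOf_eq] at ha hb
      exact (xx_strictMono h).injective (by omega)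
    -- each value of mm occurs finitely often, so we can pick a strictly increasing
    -- subsequence κ with mm (κ i) > i
    have hbig : ∀ N i : ℕ, ∃ k, N < k ∧ i < mm h k := by
      intro N i
      have hfin : ({k | mm h k ≤ i} ∪ {k | k ≤ N}).Finite := by
        refine Set.Finite.union ?_ (Set.finite_le_nat N)
        have : {k | mm h k ≤ i} ⊆ ⋃ v ∈ Finset.range (i+1), {k | mm h k = v} := by
          intro k hk
          simp only [Set.mem_setOf_eq] at hk
          exact Set.mem_biUnion (Finset.mem_range.mpr (Nat.lt_succ_of_le hk)) rfl
        exact Set.Finite.subset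
          (Set.Finite.biUnion (Finset.range (i+1)).finite_toSet (fun v _ => hmfin v)) this
      obtain ⟨k, hk⟩ := hfin.infinite_compl.nonempty
      simp only [Set.mem_compl_iff, Set.mem_union, Set.mem_setOf_eq, not_or, not_le] at hk
      exact ⟨k, hk.2, hk.1⟩
    choose F hF1 hF2 using hbig
    -- κ i : strictly increasing, mm (κ i) > i
    let κ : ℕ → ℕ := fun i => Nat.rec (F 0 0) (fun i prev => F prev (i+1)) i
    have hκmono : StrictMono κ := by
      apply strictMono_nat_of_lt_succ
      intro i
      exact hF1 (κ i) (i+1)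
    have hκmm : ∀ i, i < mm h (κ i) := by
      intro i
      cases i with
      | zero => exact hF2 0 0
      | succ i => exact hF2 (κ i) (i+1)
    set e : ℕ → ℕ := fun i => xx h (κ i) with he
    have hemono : StrictMono e := (xx_strictMono h).comp hκmono
    set g : ℕ → ℕ := fun n => ((Finset.range n).filter (fun i => e i < n)).card with hg
    have hge : ∀ i, g (e i) = i := by
      intro i
      have : (Finset.range (e i)).filter (fun j => e j < e i) = Finset.range i := by
        ext j
        simp only [Finset.mem_filter, Finset.mem_range]
        constructor
        · rintro ⟨_, hj⟩; exact hemono.lt_iff_lt.mp hj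
        · intro hj
          exact ⟨lt_of_le_of_lt (hemono.le_apply) (hemono hj), hemono hj⟩
      simp [g, this]
    refine ⟨Set.range e, Set.infinite_range_of_injective hemono.injective,
      Or.inr ⟨g, ?_, ?_⟩⟩
    · rw [Filter.tendsto_atTop_atTop]
      intro b
      refine ⟨e b + 1, fun n hn => ?_⟩
      have : Finset.range b ⊆ (Finset.range n).filter (fun i => e i < n) := by
        intro j hj
        simp only [Finset.mem_range] at hj
        have h1 : e j < n := lt_of_lt_of_le (lt_of_lt_of_le (hemono hj) (Nat.le_of_succ_le hn)) le_rfl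
        simp only [Finset.mem_filter, Finset.mem_range]
        exact ⟨lt_of_le_of_lt hemono.le_apply h1, h1⟩
      calc b = (Finset.range b).card := (Finset.card_range b).symm
        _ ≤ _ := Finset.card_le_card this
    · rintro a ⟨i, rfl⟩ b ⟨j, rfl⟩ hab
      have hij : i < j := hemono.lt_iff_lt.mp hab
      have hκij : κ i < κ j := hκmono hij
      calc g (e i) = i := hge i
        _ < mm h (κ i) := hκmm i
        _ ≤ h (e i, e j) := key h hκij
end

section
/- Let Σ be a finite alphabet (a Fintype) and let I be an infinite set of 'partial sequences', where a partial sequence is a function s : ℕ → Option Σ that is undefined (= none) only on finitely many positions. Say two partial sequences s, t 'meet' if there is a position i with s i = t i and s i ≠ none. Then there exists a partial sequence s ∈ I that meets infinitely many partial sequences from I. -/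
/-- Among infinitely many partial sequences over a finite alphabet
(each undefined only at finitely many positions), some sequence
meets infinitely many of the others. -/
theorem exists_partial_sequence_meeting_infinitely_many
    (A : Type) [Fintype A] (I : Set (ℕ → Option A))
    (hpart : ∀ s ∈ I, {i : ℕ | s i = none}.Finite)
    (hI : I.Infinite) :
    ∃ s ∈ I, {t ∈ I | ∃ i : ℕ, s i = t i ∧ s i ≠ none}.Infinite := by
  classical
  by_contra h
  push_neg at h
  have hfin : ∀ s ∈ I, {t ∈ I | ∃ i, s i = t i ∧ s i ≠ none}.Finite := by
    intro s hs; exact h s hs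
  have hdef : ∀ t ∈ I, ∃ i, t i ≠ none := by
    intro t ht
    classical
  by_contra hc; push_neg at hc
    have heq : ({i : ℕ | t i = none} : Set ℕ) = Set.univ := by
      ext i; simp [hc i]
    exact Set.infinite_univ (heq ▸ hpart t ht)
  have step : ∀ n : ℕ, ∃ T : Finset (ℕ → Option A), ↑T ⊆ I ∧ T.card = n ∧
      ∀ s ∈ T, ∀ t ∈ T, s ≠ t → ¬ ∃ i, s i = t i ∧ s i ≠ none := by
    intro n
    induction n with
    | zero => exact ⟨∅, by simp, rfl, by simp⟩
    | succ n ih =>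
      obtain ⟨T, hTI, hcard, hpair⟩ := ih
      have hU : (⋃ t ∈ T, {u ∈ I | ∃ i, t i = u i ∧ t i ≠ none}).Finite :=
        Set.Finite.biUnion T.finite_toSet (fun t ht => hfin t (hTI ht))
      obtain ⟨s, hsI, hsU⟩ := (hI.diff hU).nonempty
      have hsT : s ∉ T := by
        intro hsT
        obtain ⟨i, hi⟩ := hdef s hsI
        exact hsU (Set.mem_biUnion hsT ⟨hsI, i, rfl, hi⟩)
      refine ⟨insert s T, ?_, ?_, ?_⟩
      · intro x hx
        rcases Finset.mem_insert.mp hx with rfl | hx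
        · exact hsI
        · exact hTI hx
      · rw [Finset.card_insert_of_notMem hsT, hcard]
      · intro a ha b hb hab hmeet
        rcases Finset.mem_insert.mp ha with rfl | ha'
        · rcases Finset.mem_insert.mp hb with rfl | hb'
          · exact hab rfl
          · obtain ⟨i, h1, h2⟩ := hmeet
            exact hsU (Set.mem_biUnion hb' ⟨hsI, i, h1.symm, by rw [← h1]; exact h2⟩)
        · rcases Finset.mem_insert.mp hb with rfl | hb'
          · obtain ⟨i, h1, h2⟩ := hmeet
            exact hsU (Set.mem_biUnion ha' ⟨hsI, i, h1, h2⟩)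
          · exact hpair a ha' b hb' hab hmeet
  obtain ⟨T, hTI, hcard, hpair⟩ := step (Fintype.card A + 1)
  have hU : (⋃ t ∈ T, {i : ℕ | t i = none}).Finite :=
    Set.Finite.biUnion T.finite_toSet (fun t ht => hpart t (hTI ht))
  obtain ⟨i, hi⟩ := hU.infinite_compl.nonempty
  have hi' : ∀ t ∈ T, t i ≠ none := by
    intro t ht hno
    exact hi (Set.mem_biUnion ht hno)
  have hinj : Set.InjOn (fun t : ℕ → Option A => t i) ↑T := by
    intro a ha b hb hab
    classical
  by_contra hne
    exact hpair a ha b hb hne ⟨i, hab, hi' a ha⟩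
  have hsub : T.image (fun t : ℕ → Option A => t i) ⊆ (Finset.univ : Finset (Option A)).erase none := by
    intro x hx
    obtain ⟨t, ht, rfl⟩ := Finset.mem_image.mp hx
    exact Finset.mem_erase.mpr ⟨hi' t ht, Finset.mem_univ _⟩
  have h1 : T.card ≤ Fintype.card A := by
    calc T.card = (T.image (fun t : ℕ → Option A => t i)).card := (Finset.card_image_of_injOn hinj).symm
    _ ≤ ((Finset.univ : Finset (Option A)).erase none).card := Finset.card_le_card hsub
    _ = Fintype.card (Option A) - 1 := by rw [Finset.card_erase_of_mem (Finset.mem_univ _), Finset.card_univ]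
    _ = Fintype.card A := by simp
  omega
end

section
/- Let φ : Set ℕ → Set ℕ → Prop be an edge relation and X a set. Call a finite set Y ⊆ ℕ an X-witness if for every two distinct x, y ∈ Y there exists Z with φ X Z and (x ∈ Z ↔ y ∉ Z). If X has more than 2^n successors (i.e., the set {Z : φ X Z} has more than 2^n elements), then there exists an X-witness of cardinality at least n. -/
/-- If `X` has more than `2^n` successors then there is an `X`-witness
of cardinality at least `n`. -/
theorem exists_large_witness (φ : Set ℕ → Set ℕ → Prop) (X : Set ℕ) (n : ℕ)
    (h : ∃ S : Finset (Set ℕ), (∀ Z ∈ S, φ X Z) ∧ 2 ^ n < S.card) :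
    ∃ Y : Finset ℕ, n ≤ Y.card ∧
      ∀ x ∈ Y, ∀ y ∈ Y, x ≠ y → ∃ Z : Set ℕ, φ X Z ∧ (x ∈ Z ↔ y ∉ Z) := by
  classical
  obtain ⟨S, hS, hcard⟩ := h
  set r : ℕ → ℕ → Prop := fun x y => ∀ Z, φ X Z → (x ∈ Z ↔ y ∈ Z) with hr
  have hequiv : Equivalence r :=
    ⟨fun x Z _ => Iff.rfl, fun h Z hZ => (h Z hZ).symm,
     fun h1 h2 Z hZ => (h1 Z hZ).trans (h2 Z hZ)⟩
  let s : Setoid ℕ := ⟨r, hequiv⟩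
  have key : ∃ g : Fin n → ℕ, ∀ i j : Fin n, i ≠ j → ¬ r (g i) (g j) := by
    cases finite_or_infinite (Quotient s) with
    | inl hfin =>
      have : Fintype (Quotient s) := Fintype.ofFinite _
      let F : {Z // Z ∈ S} → (Quotient s → Prop) := fun Z =>
        Quotient.lift (fun x => x ∈ (Z : Set ℕ))
          (fun a b hab => propext (hab Z.1 (hS Z.1 Z.2)))
      have hinj : Function.Injective F := by
        intro Z1 Z2 hF
        apply Subtype.ext
        ext x
        have := congrFun hF (Quotient.mk s x)
        simp only [F, Quotient.lift_mk] at this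
        rw [this]
      have h1 : S.card ≤ Fintype.card (Quotient s → Prop) := by
        rw [← Fintype.card_coe]
        exact Fintype.card_le_of_injective F hinj
      have h2 : Fintype.card (Quotient s → Prop) = 2 ^ Fintype.card (Quotient s) := by
        simp [Fintype.card_fun]
      have h3 : 2 ^ n < 2 ^ Fintype.card (Quotient s) := lt_of_lt_of_le hcard (h2 ▸ h1)
      have h4 : n < Fintype.card (Quotient s) :=
        (Nat.pow_lt_pow_iff_right (by norm_num)).mp h3
      have h5 : Fintype.card (Fin n) ≤ Fintype.card (Quotient s) := by
        simpa using h4.le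
      obtain ⟨f⟩ := Function.Embedding.nonempty_of_card_le h5
      refine ⟨fun i => (f i).out, fun i j hij hrij => ?_⟩
      have : f i = f j := by
        rw [← Quotient.out_eq (f i), ← Quotient.out_eq (f j)]
        exact Quotient.sound hrij
      exact hij (f.injective this)
    | inr hinf =>
      let e := Infinite.natEmbedding (Quotient s)
      refine ⟨fun i => (e i).out, fun i j hij hrij => ?_⟩
      have : e i = e j := by
        rw [← Quotient.out_eq (e i), ← Quotient.out_eq (e j)]
        exact Quotient.sound hrij
      exact hij (Fin.val_injective (e.injective this))
  obtain ⟨g, hg⟩ := key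
  have hginj : Function.Injective g := by
    intro i j hgij
    by_contra hne
    exact hg i j hne (hgij ▸ hequiv.refl (g i))
  refine ⟨Finset.image g Finset.univ, ?_, ?_⟩
  · rw [Finset.card_image_of_injective _ hginj, Finset.card_univ, Fintype.card_fin]
  · intro x hx y hy hxy
    obtain ⟨i, -, rfl⟩ := Finset.mem_image.mp hx
    obtain ⟨j, -, rfl⟩ := Finset.mem_image.mp hy
    have hij : i ≠ j := fun hh => hxy (by rw [hh])
    have := hg i j hij
    rw [hr] at this
    push_neg at this
    obtain ⟨Z, hZ1, hZ2⟩ := this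
    exact ⟨Z, hZ1, by tauto⟩
end

section
/- Let C be a finite set of coordinates, and for all naturals x < y let E x y be a finite nonempty set of vectors in ℕ^C. Then there exist a family Θ of subsets of C, an infinite set D ⊆ ℕ, a bounded function f : ℕ → ℕ, and a function g : ℕ → ℕ tending to infinity, such that for all x < y in D: (1) for every v ∈ E x y there is σ ∈ Θ with v α ≤ f x for all α ∈ σ; and (2) for every σ ∈ Θ there is v ∈ E x y with v α ≤ f x for all α ∈ σ and v β > g x for all β ∈ C \ σ. -/
open Filter Set

noncomputable def rvSeq (T : ℕ → (ℕ → ℕ) → Set ℕ) : ℕ → ℕ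
  | m => sInf (T m (fun i => if _h : i < m then rvSeq T i else 0))
termination_by m => m
decreasing_by exact _h

lemma rvSeq_def (T : ℕ → (ℕ → ℕ) → Set ℕ) (m : ℕ) :
    rvSeq T m = sInf (T m (fun i => if _h : i < m then rvSeq T i else 0)) := by
  rw [rvSeq]

lemma rv_main (C : Type) [Fintype C]
    (E : ℕ → ℕ → Finset (C → ℕ)) (U : Ultrafilter ℕ) :
    ∃ (A : ℕ) (Good : Finset C → Prop), ∀ H : ℕ,
      {x | {y | (∀ v ∈ E x y, ∃ τ, Good τ ∧ ∀ α ∈ τ, v α ≤ A) ∧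
          (∀ τ, Good τ → ∃ w ∈ E x y, (∀ α ∈ τ, w α ≤ A) ∧ ∀ β ∉ τ, H < w β)} ∈ U} ∈ U := by
  classical
  set n := Fintype.card C with hn
  -- witness predicate
  let Wp : Finset C → ℕ → ℕ → ℕ → ℕ → Prop := fun τ l H x y =>
    ∃ w ∈ E x y, (∀ α ∈ τ, w α ≤ l) ∧ (∀ β ∉ τ, H < w β)
  -- goodness at level l
  let good : ℕ → Finset C → Prop := fun l τ => ∀ H, {x | {y | Wp τ l H x y} ∈ U} ∈ U
  -- for bad patterns, the promotion bound
  let badH : ℕ → Finset C → ℕ := fun l τ =>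
    if h : good l τ then 0 else Classical.choose (not_forall.mp h)
  have hbad : ∀ l τ, ¬ good l τ →
      {x | {y | ∀ w ∈ E x y, (∀ α ∈ τ, w α ≤ l) → ∃ β ∉ τ, w β ≤ badH l τ} ∈ U} ∈ U := by
    intro l τ h
    have hspec : ¬ ({x | {y | Wp τ l (badH l τ) x y} ∈ U} ∈ U) := by
      have := Classical.choose_spec (not_forall.mp h)
      simpa [badH, h] using this
    have h1 : {x | {y | Wp τ l (badH l τ) x y} ∈ U}ᶜ ∈ U :=
      (Ultrafilter.compl_mem_iff_notMem).mpr hspec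
    refine Filter.mem_of_superset h1 ?_
    intro x hx
    have hx' : {y | Wp τ l (badH l τ) x y}ᶜ ∈ U :=
      (Ultrafilter.compl_mem_iff_notMem).mpr hx
    refine Filter.mem_of_superset hx' ?_
    intro y hy
    intro w hw hsmall
    by_contra hcon
    push_neg at hcon
    exact hy ⟨w, hw, hsmall, fun β hβ => hcon β hβ⟩
  -- levels
  let F : ℕ → ℕ := fun l => Finset.univ.sup (fun τ : Finset C => badH l τ)
  let a : ℕ → ℕ := fun k => Nat.rec (motive := fun _ => ℕ) 0 (fun _ ak => max (ak + 1) (F ak)) k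
  have ha_succ : ∀ k, a (k + 1) = max (a k + 1) (F (a k)) := fun k => rfl
  have ha_mono : Monotone a := by
    apply monotone_nat_of_le_succ
    intro k
    rw [ha_succ]
    exact le_trans (Nat.le_succ _) (le_max_left _ _)
  have hbadle : ∀ k (τ : Finset C), badH (a k) τ ≤ a (k + 1) := by
    intro k τ
    rw [ha_succ]
    exact le_trans (Finset.le_sup (Finset.mem_univ τ)) (le_max_right _ _)
  clear_value a
  refine ⟨a n, fun τ => ∃ k, k ≤ n ∧ good (a k) τ, ?_⟩
  intro H
  -- the x-level good sets
  have hGX : ∀ p : Fin (n + 1) × Finset C,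
      {x | (good (a p.1) p.2 → {y | Wp p.2 (a p.1) H x y} ∈ U) ∧
           (¬ good (a p.1) p.2 → {y | ∀ w ∈ E x y, (∀ α ∈ p.2, w α ≤ a p.1) →
              ∃ β ∉ p.2, w β ≤ badH (a p.1) p.2} ∈ U)} ∈ U := by
    intro p
    by_cases hg : good (a p.1) p.2
    · refine Filter.mem_of_superset (hg H) ?_
      intro x hx
      exact ⟨fun _ => hx, fun h' => absurd hg h'⟩
    · refine Filter.mem_of_superset (hbad _ _ hg) ?_
      intro x hx
      exact ⟨fun h' => absurd h' hg, fun _ => hx⟩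
  have hIX : (⋂ p : Fin (n + 1) × Finset C, {x | (good (a p.1) p.2 → {y | Wp p.2 (a p.1) H x y} ∈ U) ∧
           (¬ good (a p.1) p.2 → {y | ∀ w ∈ E x y, (∀ α ∈ p.2, w α ≤ a p.1) →
              ∃ β ∉ p.2, w β ≤ badH (a p.1) p.2} ∈ U)}) ∈ U :=
    (Filter.iInter_mem).mpr hGX
  refine Filter.mem_of_superset hIX ?_
  intro x hx
  simp only [Set.mem_iInter] at hx
  -- the y-level sets
  have hY : ∀ p : Fin (n + 1) × Finset C,
      {y | (good (a p.1) p.2 → Wp p.2 (a p.1) H x y) ∧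
           (¬ good (a p.1) p.2 → ∀ w ∈ E x y, (∀ α ∈ p.2, w α ≤ a p.1) →
              ∃ β ∉ p.2, w β ≤ badH (a p.1) p.2)} ∈ U := by
    intro p
    by_cases hg : good (a p.1) p.2
    · refine Filter.mem_of_superset ((hx p).1 hg) ?_
      intro y hy
      exact ⟨fun _ => hy, fun h' => absurd hg h'⟩
    · refine Filter.mem_of_superset ((hx p).2 hg) ?_
      intro y hy
      exact ⟨fun h' => absurd h' hg, fun _ => hy⟩
  have hIY : (⋂ p : Fin (n + 1) × Finset C, {y | (good (a p.1) p.2 → Wp p.2 (a p.1) H x y) ∧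
           (¬ good (a p.1) p.2 → ∀ w ∈ E x y, (∀ α ∈ p.2, w α ≤ a p.1) →
              ∃ β ∉ p.2, w β ≤ badH (a p.1) p.2)}) ∈ U :=
    (Filter.iInter_mem).mpr hY
  refine Filter.mem_of_superset hIY ?_
  intro y hy
  simp only [Set.mem_iInter] at hy
  constructor
  · -- condition (1): every vector dominates a good pattern
    intro v hv
    have τsdef : ∃ τs : ℕ → Finset C, ∀ k α, α ∈ τs k ↔ v α ≤ a k := by
      refine ⟨fun k => Finset.univ.filter (fun α => v α ≤ a k), fun k α => ?_⟩
      simp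
    obtain ⟨τs, hτmem⟩ := τsdef
    have claim : ∀ k, k ≤ n + 1 →
        (∃ j, j < k ∧ good (a j) (τs j)) ∨ k ≤ (τs k).card := by
      intro k
      induction k with
      | zero => intro _; right; exact Nat.zero_le _
      | succ k ih =>
        intro hk
        rcases ih (le_trans (Nat.le_succ _) hk) with ⟨j, hj, hgj⟩ | hR
        · exact Or.inl ⟨j, Nat.lt_succ_of_lt hj, hgj⟩
        · by_cases hg : good (a k) (τs k)
          · exact Or.inl ⟨k, Nat.lt_succ_self _, hg⟩
          · right
            have hkn : k < n + 1 := lt_of_lt_of_le (Nat.lt_succ_self _) hk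
            have hyp := (hy (⟨k, hkn⟩, τs k)).2 hg v hv
              (fun α hα => (hτmem k α).mp hα)
            obtain ⟨β, hβ, hβle⟩ := hyp
            have hβ1 : β ∈ τs (k + 1) := (hτmem (k+1) β).mpr
              (le_trans hβle (hbadle k _))
            have hsub : τs k ⊆ τs (k + 1) := by
              intro α hα
              exact (hτmem (k+1) α).mpr (le_trans ((hτmem k α).mp hα) (ha_mono (Nat.le_succ _)))
            have hlt : (τs k).card < (τs (k + 1)).card :=
              Finset.card_lt_card ⟨hsub, fun hcontra => hβ (hcontra hβ1)⟩
            omega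
    rcases claim (n + 1) le_rfl with ⟨j, hj, hgj⟩ | hcard
    · have hjn : j ≤ n := Nat.lt_succ_iff.mp hj
      refine ⟨τs j, ⟨j, hjn, hgj⟩, ?_⟩
      intro α hα
      exact le_trans ((hτmem j α).mp hα) (ha_mono hjn)
    · exfalso
      have : (τs (n + 1)).card ≤ n := by
        rw [hn]
        exact le_trans (Finset.card_le_univ _) (le_of_eq (Finset.card_univ))
      omega
  · -- condition (2): every good pattern has a clean witness
    intro τ hτ
    obtain ⟨k, hk, hgk⟩ := hτ
    have hkn : k < n + 1 := Nat.lt_succ_of_le hk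
    obtain ⟨w, hw, hsmall, hbig⟩ := (hy (⟨k, hkn⟩, τ)).1 hgk
    exact ⟨w, hw, fun α hα => le_trans (hsmall α hα) (ha_mono hk), hbig⟩

/-- Ramsey-type lemma for sets of vectors (case T = S). -/
theorem ramsey_vectors (C : Type) [Fintype C]
    (E : ℕ → ℕ → Finset (C → ℕ))
    (hne : ∀ x y : ℕ, x < y → (E x y).Nonempty) :
    ∃ (Θ : Set (Set C)) (D : Set ℕ) (f g : ℕ → ℕ),
      D.Infinite ∧
      (∃ M : ℕ, ∀ i, f i ≤ M) ∧
      Filter.Tendsto g Filter.atTop Filter.atTop ∧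
      ∀ x ∈ D, ∀ y ∈ D, x < y →
        ((∀ v ∈ E x y, ∃ σ ∈ Θ, ∀ α ∈ σ, v α ≤ f x) ∧
         (∀ σ ∈ Θ, ∃ v ∈ E x y,
            (∀ α ∈ σ, v α ≤ f x) ∧ (∀ β : C, β ∉ σ → v β > g x))) := by
  classical
  let U : Ultrafilter ℕ := Ultrafilter.of atTop
  have hU : (U : Filter ℕ) ≤ atTop := Ultrafilter.of_le atTop
  obtain ⟨A, Good, hMain⟩ := rv_main C E U
  set QSet : ℕ → ℕ → Set ℕ := fun x H =>
    {y | (∀ v ∈ E x y, ∃ τ, Good τ ∧ ∀ α ∈ τ, v α ≤ A) ∧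
         (∀ τ, Good τ → ∃ w ∈ E x y, (∀ α ∈ τ, w α ≤ A) ∧ ∀ β ∉ τ, H < w β)} with hQdef
  have hXmem : ∀ H, {x | QSet x H ∈ U} ∈ U := hMain
  -- build the sequence
  let T : ℕ → (ℕ → ℕ) → Set ℕ := fun m prev =>
    {x | QSet x m ∈ U} ∩ (⋂ i ∈ Finset.range m, (QSet (prev i) i ∩ Ioi (prev i)))
  let d : ℕ → ℕ := rvSeq T
  have hd : ∀ m, (QSet (d m) m ∈ U) ∧ ∀ i, i < m → d m ∈ QSet (d i) i ∧ d i < d m := by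
    intro m
    induction m using Nat.strong_induction_on with
    | _ m ih =>
      have hTm : T m (fun i => if _h : i < m then d i else 0) ∈ U := by
        refine Filter.inter_mem (hXmem m) ?_
        refine (Filter.biInter_finset_mem _).mpr ?_
        intro i hi
        have hi' : i < m := Finset.mem_range.mp hi
        simp only [dif_pos hi']
        exact Filter.inter_mem ((ih i hi').1) (hU (Ioi_mem_atTop _))
      have hmem : d m ∈ T m (fun i => if _h : i < m then d i else 0) := by
        have : d m = sInf (T m (fun i => if _h : i < m then d i else 0)) := rvSeq_def T m
        rw [this]
        exact Nat.sInf_mem (Filter.nonempty_of_mem hTm)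
      obtain ⟨h1, h2⟩ := hmem
      refine ⟨h1, fun i hi => ?_⟩
      have h3 := Set.mem_iInter₂.mp h2 i (Finset.mem_range.mpr hi)
      simp only [dif_pos hi] at h3
      exact ⟨h3.1, h3.2⟩
  have hmono : StrictMono d := fun i m hi => ((hd m).2 i hi).2
  have hle : ∀ m, m ≤ d m := by
    intro m
    induction m with
    | zero => exact Nat.zero_le _
    | succ m ihm => exact Nat.succ_le_of_lt (lt_of_le_of_lt ihm (hmono (Nat.lt_succ_self m)))
  let g : ℕ → ℕ := fun t => (Finset.range (t + 1)).sup (fun i => if d i ≤ t then i else 0)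
  have hg_le : ∀ i, g (d i) ≤ i := by
    intro i
    refine Finset.sup_le ?_
    intro j _hj
    by_cases h : d j ≤ d i
    · rw [if_pos h]
      by_contra hc
      push_neg at hc
      exact absurd (hmono hc) (not_lt.mpr h)
    · rw [if_neg h]; exact Nat.zero_le _
  have hg_tendsto : Tendsto g atTop atTop := by
    refine tendsto_atTop_atTop.mpr ?_
    intro b
    refine ⟨d b, fun t ht => ?_⟩
    have hb : b ∈ Finset.range (t + 1) :=
      Finset.mem_range.mpr (Nat.lt_succ_of_le (le_trans (hle b) ht))
    have := Finset.le_sup (f := fun i => if d i ≤ t then i else 0) hb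
    simp only [if_pos ht] at this
    exact this
  refine ⟨{s : Set C | ∃ τ : Finset C, Good τ ∧ ↑τ = s}, Set.range d, fun _ => A, g,
    Set.infinite_range_of_injective hmono.injective, ⟨A, fun _ => le_rfl⟩, hg_tendsto, ?_⟩
  rintro x ⟨i, rfl⟩ y ⟨j, rfl⟩ hxy
  have hij : i < j := hmono.lt_iff_lt.mp hxy
  obtain ⟨hC1, hC2⟩ : d j ∈ QSet (d i) i := ((hd j).2 i hij).1
  constructor
  · intro v hv
    obtain ⟨τ, hτGood, hτsmall⟩ := hC1 v hv
    exact ⟨↑τ, ⟨τ, hτGood, rfl⟩, fun α hα => hτsmall α (Finset.mem_coe.mp hα)⟩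
  · rintro σ ⟨τ, hτGood, rfl⟩
    obtain ⟨w, hw, hsmall, hbig⟩ := hC2 τ hτGood
    refine ⟨w, hw, fun α hα => hsmall α (Finset.mem_coe.mp hα), fun β hβ => ?_⟩
    exact lt_of_le_of_lt (hg_le i) (hbig β (fun h => hβ (Finset.mem_coe.mpr h)))
end
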